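/- Let Δ be a pure (d-1)-dimensional simplicial complex with d ≥ 2. Then the short h-numbers h*_i(Δ) := ∑_{v ∈ V(Δ)} h_i(lk_Δ v) satisfy h*_{i-1}(Δ) = i·h_i(Δ) + (d-i+1)·h_{i-1}(Δ) for all 1 ≤ i ≤ d. -/

import Mathlib

open Finset

variable {V : Type*} [DecidableEq V]

/-- A simplicial complex: a collection of finite sets closed under taking subsets. -/
def IsComplex (Δ : Finset (Finset V)) : Prop := ∀ F ∈ Δ, ∀ G ⊆ F, G ∈ Δ

/-- `Δ` is pure of dimension `d - 1`: every face is contained in a face with `d` vertices. -/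
def IsPure (Δ : Finset (Finset V)) (d : ℕ) : Prop := ∀ F ∈ Δ, ∃ G ∈ Δ, F ⊆ G ∧ G.card = d

/-- `fNum Δ i` is the number of faces with `i` vertices, i.e. `f_{i-1}(Δ)`. -/
def fNum (Δ : Finset (Finset V)) (i : ℕ) : ℕ := (Δ.filter fun F => F.card = i).card

/-- The reduced Euler characteristic `χ̃(Δ) = ∑_{F ∈ Δ} (-1)^{|F|-1}` (empty face contributes `-1`). -/
def chi (Δ : Finset (Finset V)) : ℤ := ∑ F ∈ Δ, (-1 : ℤ) ^ (F.card + 1)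

/-- The link of a face `F` in `Δ`. -/
def link (Δ : Finset (Finset V)) (F : Finset V) : Finset (Finset V) :=
  Δ.filter fun G => Disjoint F G ∧ F ∪ G ∈ Δ

/-- The `h`-numbers of a `(d-1)`-dimensional complex:
`h_j = ∑_{i=0}^j (-1)^{j-i} C(d-i, j-i) f_{i-1}`. -/
def hNum (Δ : Finset (Finset V)) (d j : ℕ) : ℤ :=
  ∑ i ∈ Finset.range (j + 1), (-1 : ℤ) ^ (j - i) * ((d - i).choose (j - i)) * fNum Δ i

/-- The error function `ε_Δ(F) = χ̃(lk_Δ F) - (-1)^{d-1-|F|}`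
(the exponent `d + |F| + 1` has the same parity as `d - 1 - |F|`). -/
def eps (Δ : Finset (Finset V)) (d : ℕ) (F : Finset V) : ℤ :=
  chi (link Δ F) - (-1 : ℤ) ^ (d + F.card + 1)

lemma sum_fNum_link [Fintype V] (Δ : Finset (Finset V)) (hcx : IsComplex Δ) (k : ℕ) :
    ∑ v ∈ Finset.univ.filter (fun v : V => ({v} : Finset V) ∈ Δ),
        fNum (link Δ {v}) k = (k + 1) * fNum Δ (k + 1) := by
  classical
  have h1 : ∑ v ∈ Finset.univ.filter (fun v : V => ({v} : Finset V) ∈ Δ),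
      fNum (link Δ {v}) k
      = ((Finset.univ.filter (fun v : V => ({v} : Finset V) ∈ Δ)).sigma
          (fun v => (link Δ {v}).filter fun G => G.card = k)).card := by
    rw [Finset.card_sigma]; rfl
  have h2 : (k + 1) * fNum Δ (k + 1)
      = ((Δ.filter fun F => F.card = k + 1).sigma (fun F => F)).card := by
    rw [Finset.card_sigma]
    rw [Finset.sum_congr rfl (fun F hF => (Finset.mem_filter.mp hF).2)]
    rw [Finset.sum_const, smul_eq_mul, mul_comm]
    rfl
  rw [h1, h2]
  refine Finset.card_bij' (fun a _ => ⟨insert a.1 a.2, a.1⟩)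
    (fun b _ => ⟨b.2, b.1.erase b.2⟩) ?_ ?_ ?_ ?_
  · rintro ⟨v, G⟩ ha
    rw [Finset.mem_sigma, Finset.mem_filter, Finset.mem_filter] at ha
    obtain ⟨⟨-, hv⟩, hGlink, hGcard⟩ := ha
    rw [link, Finset.mem_filter] at hGlink
    obtain ⟨hG, hdisj, hunion⟩ := hGlink
    have hvG : v ∉ G := by
      simpa [Finset.disjoint_singleton_left] using hdisj
    rw [Finset.mem_sigma, Finset.mem_filter]
    refine ⟨⟨?_, ?_⟩, ?_⟩
    · simpa only [Finset.insert_eq] using hunion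
    · simp [Finset.card_insert_of_notMem hvG, hGcard]
    · simp
  · rintro ⟨F, v⟩ hb
    rw [Finset.mem_sigma, Finset.mem_filter] at hb
    obtain ⟨⟨hF, hFcard⟩, hvF⟩ := hb
    rw [Finset.mem_sigma, Finset.mem_filter, Finset.mem_filter]
    refine ⟨⟨Finset.mem_univ _, ?_⟩, ?_, ?_⟩
    · exact hcx F hF _ (Finset.singleton_subset_iff.mpr hvF)
    · rw [link, Finset.mem_filter]
      refine ⟨hcx F hF _ (Finset.erase_subset _ _), ?_, ?_⟩
      · simp [Finset.disjoint_singleton_left]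
      · rw [← Finset.insert_eq, Finset.insert_erase hvF]; exact hF
    · rw [Finset.card_erase_of_mem hvF, hFcard]; rfl
  · rintro ⟨v, G⟩ ha
    rw [Finset.mem_sigma, Finset.mem_filter, Finset.mem_filter] at ha
    obtain ⟨-, hGlink, -⟩ := ha
    rw [link, Finset.mem_filter] at hGlink
    have hvG : v ∉ G := by
      simpa [Finset.disjoint_singleton_left] using hGlink.2.1
    simp [Finset.erase_insert hvG]
  · rintro ⟨F, v⟩ hb
    rw [Finset.mem_sigma, Finset.mem_filter] at hb
    simp [Finset.insert_erase hb.2]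

/-- the short `h`-numbers `h*_i(Δ) = ∑_{v ∈ V(Δ)} h_i(lk_Δ v)` satisfy
`h*_{i-1} = i·h_i + (d-i+1)·h_{i-1}` for `1 ≤ i ≤ d`. -/
theorem short_h_relation [Fintype V] (Δ : Finset (Finset V)) (d : ℕ)
    (hcx : IsComplex Δ) (hne : ∅ ∈ Δ) (hpure : IsPure Δ d) (hd : 2 ≤ d)
    (i : ℕ) (h1 : 1 ≤ i) (h2 : i ≤ d) :
    ∑ v ∈ Finset.univ.filter (fun v : V => ({v} : Finset V) ∈ Δ),
        hNum (link Δ {v}) (d - 1) (i - 1)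
      = (i : ℤ) * hNum Δ d i + ((d : ℤ) - i + 1) * hNum Δ d (i - 1) := by
  classical
  have hi1 : i - 1 + 1 = i := by omega
  have hL : ∑ v ∈ Finset.univ.filter (fun v : V => ({v} : Finset V) ∈ Δ),
      hNum (link Δ {v}) (d - 1) (i - 1)
      = ∑ k ∈ Finset.range i, (-1 : ℤ) ^ (i - 1 - k) * ((d - 1 - k).choose (i - 1 - k)) *
          ((k + 1 : ℕ) * fNum Δ (k + 1) : ℕ) := by
    unfold hNum
    rw [hi1, Finset.sum_comm]
    refine Finset.sum_congr rfl fun k hk => ?_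
    rw [← Finset.mul_sum, ← Nat.cast_sum, sum_fNum_link Δ hcx k]
  rw [hL]
  have key : ∑ k ∈ Finset.range i, (-1 : ℤ) ^ (i - 1 - k) * ((d - 1 - k).choose (i - 1 - k)) *
          ((k + 1 : ℕ) * fNum Δ (k + 1) : ℕ)
      = ∑ j ∈ Finset.range (i + 1),
          (-1 : ℤ) ^ (i - j) * ((d - j).choose (i - j)) * ((j : ℤ) * fNum Δ j) := by
    rw [Finset.sum_range_succ'
      (fun j => (-1 : ℤ) ^ (i - j) * ((d - j).choose (i - j)) * ((j : ℤ) * fNum Δ j)) i]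
    simp only [Nat.cast_zero, zero_mul, mul_zero, add_zero]
    refine Finset.sum_congr rfl fun k hk => ?_
    have e1 : i - 1 - k = i - (k + 1) := by omega
    have e2 : d - 1 - k = d - (k + 1) := by omega
    rw [e1, e2]
    push_cast
    ring
  rw [key]
  unfold hNum
  rw [hi1, Finset.sum_range_succ, Finset.sum_range_succ]
  have hterm : ∀ j ∈ Finset.range i,
      (-1 : ℤ) ^ (i - j) * ((d - j).choose (i - j)) * ((j : ℤ) * fNum Δ j)
      = (i : ℤ) * ((-1 : ℤ) ^ (i - j) * ((d - j).choose (i - j)) * fNum Δ j)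
        + ((d : ℤ) - i + 1) *
            ((-1 : ℤ) ^ (i - 1 - j) * ((d - j).choose (i - 1 - j)) * fNum Δ j) := by
    intro j hj
    have hji : j < i := Finset.mem_range.mp hj
    have e1 : i - j = (i - 1 - j) + 1 := by omega
    have hc := Nat.choose_succ_right_eq (d - j) (i - 1 - j)
    rw [← e1] at hc
    have e2 : d - j - (i - 1 - j) = d - i + 1 := by omega
    rw [e2] at hc
    have hcast : ((d - j).choose (i - j) : ℤ) * ((i : ℤ) - j)
        = ((d - j).choose (i - 1 - j) : ℤ) * ((d : ℤ) - i + 1) := by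
      calc ((d - j).choose (i - j) : ℤ) * ((i : ℤ) - j)
          = (((d - j).choose (i - j) * (i - j) : ℕ) : ℤ) := by push_cast [hji.le]; ring
        _ = (((d - j).choose (i - 1 - j) * (d - i + 1) : ℕ) : ℤ) := by rw [hc]
        _ = ((d - j).choose (i - 1 - j) : ℤ) * ((d : ℤ) - i + 1) := by push_cast [h2]; ring
    have hpow : (-1 : ℤ) ^ (i - j) = -(-1 : ℤ) ^ (i - 1 - j) := by
      rw [e1, pow_succ]; ring
    rw [hpow]
    linear_combination ((-1 : ℤ) ^ (i - 1 - j)) * (fNum Δ j : ℤ) * hcast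
  rw [Finset.sum_congr rfl hterm, Finset.sum_add_distrib, ← Finset.mul_sum, ← Finset.mul_sum]
  simp only [Nat.sub_self, pow_zero, Nat.choose_zero_right, Nat.cast_one]
  ring
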